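/- For every s ∈ (0, 1/2) there exists δ > 0 such that for all (a,b) ∈ ℝ² with a² + b² < δ²: if a < b then (V_0^1 ∘ H_0^1)³(s + a, s + 1/2 + b) = (s + 3a − 2b, s + 1/2 + 2a − b), and if a > b then (V_0^1 ∘ H_0^1)³(s + a, s + 1/2 + b) = (s − a + 2b, s + 1/2 − 2a + 3b) (all coordinates taken modulo 1). That is, (V_0^1 ∘ H_0^1)³ is locally affine on each of the two sides of the segment {(s, s + 1/2) : s ∈ (0, 1/2)}, with linear parts given by the matrices [[3, −2], [2, −1]] and [[−1, 2], [−2, 3]] respectively. -/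
import Mathlib


/- 𝕋 = ℝ/ℤ, with d_𝕋 the quotient distance (norm of the difference in AddCircle 1). -/
noncomputable section

abbrev T1 := AddCircle (1 : ℝ)

/-- The distance d_𝕋(x,y) = min{|x−y|, 1−|x−y|} on 𝕋. -/
noncomputable def dT (x y : T1) : ℝ := ‖x - y‖

/-- Horizontal wedge flow map H_ω^τ(x₁,x₂) = (x₁ + τ·d_𝕋(x₂,ω), x₂). -/
noncomputable def Hmap (ω : T1) (τ : ℝ) (p : T1 × T1) : T1 × T1 :=
  (p.1 + (↑(τ * dT p.2 ω) : T1), p.2)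

/-- Vertical wedge flow map V_ω^τ(x₁,x₂) = (x₁, x₂ + τ·d_𝕋(x₁,ω)). -/
noncomputable def Vmap (ω : T1) (τ : ℝ) (p : T1 × T1) : T1 × T1 :=
  (p.1, p.2 + (↑(τ * dT p.1 ω) : T1))

lemma norm_lo' {x : ℝ} (h1 : 0 ≤ x) (h2 : x < 1/2) : ‖((x:ℝ):T1)‖ = x := by
  rw [AddCircle.norm_eq]
  simp only [inv_one, one_mul, mul_one]
  have hr : round x = 0 := by
    rw [round_eq, Int.floor_eq_iff]
    push_cast; constructor <;> linarith
  rw [hr]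
  push_cast
  rw [sub_zero, abs_of_nonneg h1]

lemma norm_hi' {x : ℝ} (h1 : 1/2 < x) (h2 : x ≤ 1) : ‖((x:ℝ):T1)‖ = 1 - x := by
  rw [AddCircle.norm_eq]
  simp only [inv_one, one_mul, mul_one]
  have hr : round x = 1 := by
    rw [round_eq, Int.floor_eq_iff]
    push_cast; constructor <;> linarith
  rw [hr]
  rw [show x - ((1:ℤ):ℝ) = -(1 - x) by push_cast; ring, abs_neg,
    abs_of_nonneg (by linarith)]

lemma coe_eq_of_step {u w : ℝ} (h : u = w ∨ u = w + 1) : ((u:ℝ):T1) = ((w:ℝ):T1) := by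
  have h1 : ((1:ℝ):T1) = 0 := AddCircle.coe_period 1
  rcases h with h | h <;> rw [h]
  rw [AddCircle.coe_add, h1, add_zero]

lemma Hstep {u v r : ℝ} (w : ℝ) (h : ‖((v:ℝ):T1)‖ = r) (h2 : u + r = w ∨ u + r = w + 1) :
    Hmap 0 1 (((u:ℝ):T1), ((v:ℝ):T1)) = (((w:ℝ):T1), ((v:ℝ):T1)) := by
  have hd : dT ((v:ℝ):T1) 0 = r := by simpa [dT] using h
  simp only [Hmap, hd, one_mul]
  exact Prod.ext (by rw [← AddCircle.coe_add]; exact coe_eq_of_step h2) rfl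

lemma Vstep {u v r : ℝ} (w : ℝ) (h : ‖((u:ℝ):T1)‖ = r) (h2 : v + r = w ∨ v + r = w + 1) :
    Vmap 0 1 (((u:ℝ):T1), ((v:ℝ):T1)) = (((u:ℝ):T1), ((w:ℝ):T1)) := by
  have hd : dT ((u:ℝ):T1) 0 = r := by simpa [dT] using h
  simp only [Vmap, hd, one_mul]
  exact Prod.ext rfl (by rw [← AddCircle.coe_add]; exact coe_eq_of_step h2)

/-- (V_0^1 ∘ H_0^1)³ is locally affine on each of the two sides of the
segment {(s, s+1/2) : s ∈ (0,1/2)}, with linear parts [[3, −2], [2, −1]] (on the side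
a < b) and [[−1, 2], [−2, 3]] (on the side a > b). -/
theorem wedge_tau1_cube_locally_affine (s : ℝ) (hs : s ∈ Set.Ioo (0 : ℝ) (1/2)) :
    ∃ δ > 0, ∀ a b : ℝ, a ^ 2 + b ^ 2 < δ ^ 2 →
      (a < b →
        (Vmap 0 1 ∘ Hmap 0 1)^[3] (((s + a : ℝ) : T1), ((s + 1/2 + b : ℝ) : T1)) =
          (((s + 3*a - 2*b : ℝ) : T1), ((s + 1/2 + 2*a - b : ℝ) : T1))) ∧
      (a > b →
        (Vmap 0 1 ∘ Hmap 0 1)^[3] (((s + a : ℝ) : T1), ((s + 1/2 + b : ℝ) : T1)) =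
          (((s - a + 2*b : ℝ) : T1), ((s + 1/2 - 2*a + 3*b : ℝ) : T1))) := by
  obtain ⟨hs0, hs1⟩ := hs
  refine ⟨min s (1/2 - s) / 8, div_pos (lt_min hs0 (by linarith)) (by norm_num), ?_⟩
  set δ := min s (1/2 - s) / 8 with hδ
  have hδs : 8 * δ ≤ s := by
    have := min_le_left s (1/2 - s); rw [hδ]; linarith
  have hδs' : 8 * δ ≤ 1/2 - s := by
    have := min_le_right s (1/2 - s); rw [hδ]; linarith
  have hδ0 : 0 < δ := div_pos (lt_min hs0 (by linarith)) (by norm_num)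
  intro a b hab
  have ha : |a| < δ := by
    rw [abs_lt]; constructor <;> nlinarith [sq_nonneg b]
  have hb : |b| < δ := by
    rw [abs_lt]; constructor <;> nlinarith [sq_nonneg a]
  rw [abs_lt] at ha hb
  obtain ⟨ha1, ha2⟩ := ha
  obtain ⟨hb1, hb2⟩ := hb
  have hiter : ∀ p : T1 × T1, (Vmap 0 1 ∘ Hmap 0 1)^[3] p =
      Vmap 0 1 (Hmap 0 1 (Vmap 0 1 (Hmap 0 1 (Vmap 0 1 (Hmap 0 1 p))))) := fun p => rfl
  constructor
  · intro hab'
    have e1 : Hmap 0 1 (((s + a : ℝ):T1), ((s + 1/2 + b : ℝ):T1)) =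
        (((1/2 + a - b : ℝ):T1), ((s + 1/2 + b : ℝ):T1)) :=
      Hstep _ (norm_hi' (by linarith) (by linarith)) (Or.inl (by ring))
    have e2 : Vmap 0 1 (((1/2 + a - b : ℝ):T1), ((s + 1/2 + b : ℝ):T1)) =
        (((1/2 + a - b : ℝ):T1), ((s + a : ℝ):T1)) :=
      Vstep _ (norm_lo' (by linarith) (by linarith)) (Or.inr (by ring))
    have e3 : Hmap 0 1 (((1/2 + a - b : ℝ):T1), ((s + a : ℝ):T1)) =
        (((s + 1/2 + 2*a - b : ℝ):T1), ((s + a : ℝ):T1)) :=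
      Hstep _ (norm_lo' (by linarith) (by linarith)) (Or.inl (by ring))
    have e4 : Vmap 0 1 (((s + 1/2 + 2*a - b : ℝ):T1), ((s + a : ℝ):T1)) =
        (((s + 1/2 + 2*a - b : ℝ):T1), ((1/2 - a + b : ℝ):T1)) :=
      Vstep _ (norm_hi' (by linarith) (by linarith)) (Or.inl (by ring))
    have e5 : Hmap 0 1 (((s + 1/2 + 2*a - b : ℝ):T1), ((1/2 - a + b : ℝ):T1)) =
        (((s + 3*a - 2*b : ℝ):T1), ((1/2 - a + b : ℝ):T1)) :=
      Hstep _ (norm_hi' (by linarith) (by linarith)) (Or.inr (by ring))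
    have e6 : Vmap 0 1 (((s + 3*a - 2*b : ℝ):T1), ((1/2 - a + b : ℝ):T1)) =
        (((s + 3*a - 2*b : ℝ):T1), ((s + 1/2 + 2*a - b : ℝ):T1)) :=
      Vstep _ (norm_lo' (by linarith) (by linarith)) (Or.inl (by ring))
    rw [hiter, e1, e2, e3, e4, e5, e6]
  · intro hab'
    have e1 : Hmap 0 1 (((s + a : ℝ):T1), ((s + 1/2 + b : ℝ):T1)) =
        (((1/2 + a - b : ℝ):T1), ((s + 1/2 + b : ℝ):T1)) :=
      Hstep _ (norm_hi' (by linarith) (by linarith)) (Or.inl (by ring))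
    have e2 : Vmap 0 1 (((1/2 + a - b : ℝ):T1), ((s + 1/2 + b : ℝ):T1)) =
        (((1/2 + a - b : ℝ):T1), ((s - a + 2*b : ℝ):T1)) :=
      Vstep _ (norm_hi' (by linarith) (by linarith)) (Or.inr (by ring))
    have e3 : Hmap 0 1 (((1/2 + a - b : ℝ):T1), ((s - a + 2*b : ℝ):T1)) =
        (((s + 1/2 + b : ℝ):T1), ((s - a + 2*b : ℝ):T1)) :=
      Hstep _ (norm_lo' (by linarith) (by linarith)) (Or.inl (by ring))
    have e4 : Vmap 0 1 (((s + 1/2 + b : ℝ):T1), ((s - a + 2*b : ℝ):T1)) =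
        (((s + 1/2 + b : ℝ):T1), ((1/2 - a + b : ℝ):T1)) :=
      Vstep _ (norm_hi' (by linarith) (by linarith)) (Or.inl (by ring))
    have e5 : Hmap 0 1 (((s + 1/2 + b : ℝ):T1), ((1/2 - a + b : ℝ):T1)) =
        (((s - a + 2*b : ℝ):T1), ((1/2 - a + b : ℝ):T1)) :=
      Hstep _ (norm_lo' (by linarith) (by linarith)) (Or.inr (by ring))
    have e6 : Vmap 0 1 (((s - a + 2*b : ℝ):T1), ((1/2 - a + b : ℝ):T1)) =
        (((s - a + 2*b : ℝ):T1), ((s + 1/2 - 2*a + 3*b : ℝ):T1)) :=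
      Vstep _ (norm_lo' (by linarith) (by linarith)) (Or.inl (by ring))
    rw [hiter, e1, e2, e3, e4, e5, e6]
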